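/- Let R be a Noetherian ring of prime characteristic p, c ∈ R with finite purity exponent 𝔢_c, M an R-module, N ⊆ M a submodule, u ∈ M, and e ≥ 𝔢_c an integer. Then u ∈ N if and only if c · u^{p^e}_M ∈ N^{[p^e]}_M, where u^{p^e}_M = 1 ⊗ u ∈ {}^e R ⊗_R M and N^{[p^e]}_M is the image of {}^e R ⊗_R N in {}^e R ⊗_R M. -/

import Mathlib

/-!
STATEMENT 18.  `R` Noetherian of prime characteristic `p`, `c` with finite
purity exponent `𝔢_c`, `M` an `R`-module, `N ⊆ M`, `u ∈ M`, `e ≥ 𝔢_c`.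
Then `u ∈ N` iff `c · u^{pᵉ}_M ∈ N^{[pᵉ]}_M`, where `u^{pᵉ}_M = 1 ⊗ u` and
`c · u^{pᵉ}_M = ᵉc ⊗ u` in `ᵉR ⊗_R M` (the action through the left factor),
and `N^{[pᵉ]}_M` is the image of `ᵉR ⊗_R N` in `ᵉR ⊗_R M`.
-/

open scoped TensorProduct

universe u

/-- `FrobTwist R p e` is `R` viewed as an `R`-module via the `e`-th iterate of
the Frobenius endomorphism (the paper's `ᵉR`). -/
def FrobTwist (R : Type u) (p e : ℕ) : Type u := R

instance (R : Type u) [CommRing R] (p e : ℕ) : CommRing (FrobTwist R p e) :=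
  inferInstanceAs (CommRing R)

noncomputable instance (R : Type u) [CommRing R] (p e : ℕ) [Fact p.Prime] [CharP R p] :
    Module R (FrobTwist R p e) :=
  Module.compHom R (iterateFrobenius R p e)

/-- The `R`-linear map `θ_{e,c} : R → ᵉR` with `1 ↦ ᵉc`. -/
noncomputable def thetaMap (R : Type u) [CommRing R] (p e : ℕ) [Fact p.Prime] [CharP R p]
    (c : R) : R →ₗ[R] FrobTwist R p e where
  toFun r := (iterateFrobenius R p e r * c : R)
  map_add' a b := by
    show iterateFrobenius R p e (a + b) * c = iterateFrobenius R p e a * c + iterateFrobenius R p e b * c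
    rw [map_add, add_mul]
  map_smul' r x := by
    show iterateFrobenius R p e (r * x) * c = iterateFrobenius R p e r * (iterateFrobenius R p e x * c)
    rw [map_mul, mul_assoc]

/-- A map of `R`-modules is pure if it stays injective after tensoring with
every `R`-module. -/
def IsPureMap {R : Type u} [CommRing R] {M N : Type u}
    [AddCommGroup M] [AddCommGroup N] [Module R M] [Module R N]
    (f : M →ₗ[R] N) : Prop :=
  ∀ (V : Type u) [AddCommGroup V] [Module R V],
    Function.Injective (LinearMap.lTensor V f)

/-- The purity exponent `𝔢_c ∈ ℕ ∪ {∞}`: the least `e` such that `θ_{e',c}` is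
pure for all `e' ≥ e` (and `∞` if there is no such `e`). -/
noncomputable def purityExponent (R : Type u) [CommRing R] (p : ℕ)
    [Fact p.Prime] [CharP R p] (c : R) : ℕ∞ :=
  sInf {n : ℕ∞ | ∃ e : ℕ, n = (e : ℕ∞) ∧
    ∀ e' : ℕ, e ≤ e' → IsPureMap (thetaMap R p e' c)}

theorem mem_iff_frobenius_power_mem
    (R : Type u) [CommRing R] [IsNoetherianRing R]
    (p : ℕ) [Fact p.Prime] [CharP R p] (c : R)
    (hfin : purityExponent R p c ≠ ⊤)
    (M : Type u) [AddCommGroup M] [Module R M]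
    (N : Submodule R M) (u : M) (e : ℕ)
    (he : purityExponent R p c ≤ (e : ℕ∞)) :
    u ∈ N ↔
      ((show FrobTwist R p e from c) ⊗ₜ[R] u : FrobTwist R p e ⊗[R] M) ∈
        LinearMap.range (LinearMap.lTensor (FrobTwist R p e) N.subtype) := by

  classical
  -- extract purity of θ_{e,c}
  have hne : {n : ℕ∞ | ∃ e : ℕ, n = (e : ℕ∞) ∧
      ∀ e' : ℕ, e ≤ e' → IsPureMap (thetaMap R p e' c)}.Nonempty := by
    by_contra h
    rw [Set.not_nonempty_iff_eq_empty] at h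
    exact hfin (by rw [purityExponent, h, sInf_empty])
  have hmem := csInf_mem hne
  obtain ⟨e0, heq, hall⟩ := hmem
  rw [purityExponent, heq, Nat.cast_le] at he
  have hpure : IsPureMap (thetaMap R p e c) := hall e he
  have hexact : Function.Exact (LinearMap.lTensor (FrobTwist R p e) N.subtype)
      (LinearMap.lTensor (FrobTwist R p e) N.mkQ) :=
    lTensor_exact (FrobTwist R p e) (LinearMap.exact_subtype_mkQ N)
      (Submodule.mkQ_surjective N)
  constructor
  · intro hu
    exact ⟨(show FrobTwist R p e from c) ⊗ₜ[R] (⟨u, hu⟩ : N), by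
      rfl⟩
  · intro h
    have h0 : LinearMap.lTensor (FrobTwist R p e) N.mkQ
        ((show FrobTwist R p e from c) ⊗ₜ[R] u) = 0 := by
      rw [hexact]
      obtain ⟨x, hx⟩ := h
      exact ⟨x, hx⟩
    have h0' : (show FrobTwist R p e from c) ⊗ₜ[R] (N.mkQ u)
        = (0 : FrobTwist R p e ⊗[R] (M ⧸ N)) := by
      exact h0
    have h1 : (N.mkQ u) ⊗ₜ[R] (show FrobTwist R p e from c)
        = (0 : (M ⧸ N) ⊗[R] FrobTwist R p e) := by
      have := congrArg (TensorProduct.comm R (FrobTwist R p e) (M ⧸ N)) h0'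
      rw [map_zero] at this
      exact this
    have hθ : thetaMap R p e c 1 = (show FrobTwist R p e from c) := by
      show iterateFrobenius R p e 1 * c = c
      rw [map_one, one_mul]
    have h2 : LinearMap.lTensor (M ⧸ N) (thetaMap R p e c)
        ((N.mkQ u) ⊗ₜ[R] (1 : R)) = 0 := by
      rw [LinearMap.lTensor_tmul, hθ]
      exact h1
    have h3 : (N.mkQ u) ⊗ₜ[R] (1 : R) = (0 : (M ⧸ N) ⊗[R] R) := by
      apply hpure (M ⧸ N)
      rw [h2, map_zero]
    have h4 : N.mkQ u = 0 := by
      have := congrArg (TensorProduct.rid R (M ⧸ N)) h3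
      simpa using this
    simpa [Submodule.Quotient.mk_eq_zero] using h4
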